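/- For finitely supported real sequences b = {b_I} and β = {β_J}, with σ independent uniform ±1 random signs, the averaged operator norm of the composition P^{0,0}_b P^{σ,1,0}_β satisfies the exact equality ‖P^{0,0}_b P^{σ,1,0}_β‖_{E,2→2} = sup_{J∈𝒟} [ β_J² |J| Σ_{I∈𝒟, J⊊I} b_I² / |I| ]^{1/2}. -/

import Mathlib

open MeasureTheory ProbabilityTheory Real Filter
open scoped ENNReal

attribute [local instance] Classical.propDecidable

noncomputable section

namespace RandomParaproducts

/-- Dyadic intervals: `(n, k)` represents `[k·2ⁿ, (k+1)·2ⁿ)`. -/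
abbrev D : Type := ℤ × ℤ

/-- The length `2ⁿ` of the dyadic interval `(n, k)`. -/
def len (I : D) : ℝ := (2 : ℝ) ^ I.1

/-- The dyadic interval `[k·2ⁿ, (k+1)·2ⁿ)` as a subset of `ℝ`. -/
def ival (I : D) : Set ℝ := Set.Ico ((I.2 : ℝ) * (2 : ℝ) ^ I.1) (((I.2 : ℝ) + 1) * (2 : ℝ) ^ I.1)

/-- The left half of a dyadic interval. -/
def lc (I : D) : D := (I.1 - 1, 2 * I.2)

/-- The right half of a dyadic interval. -/
def rc (I : D) : D := (I.1 - 1, 2 * I.2 + 1)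

/-- The `L²`-normalized Haar function `h_I = h⁰_I`. -/
def haar (I : D) : ℝ → ℝ := fun x =>
  (Real.sqrt (len I))⁻¹ *
    ((ival (rc I)).indicator (fun _ => (1 : ℝ)) x - (ival (lc I)).indicator (fun _ => (1 : ℝ)) x)

/-- The function `h¹_I = |h_I| = |I|^{-1/2} 1_I`. -/
def haar1 (I : D) : ℝ → ℝ := fun x =>
  (Real.sqrt (len I))⁻¹ * (ival I).indicator (fun _ => (1 : ℝ)) x

/-- `h^ε_I`, where `false` codes the exponent `0` and `true` codes the exponent `1`. -/
def hfun : Bool → D → ℝ → ℝ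
  | false => haar
  | true => haar1

/-- The inner product `⟨f, g⟩ = ∫ f g` on `L²(ℝ)`. -/
def ip (f g : ℝ → ℝ) : ℝ := ∫ x, f x * g x

/-- The paraproduct `P^{ε,δ}_b f = ∑_I b_I ⟨f, h^δ_I⟩ h^ε_I` with finitely supported
numerical symbol `b`. -/
def P (e d : Bool) (b : D →₀ ℝ) (f : ℝ → ℝ) : ℝ → ℝ := fun x =>
  ∑ I ∈ b.support, b I * ip f (hfun d I) * hfun e I x

/-- The signed paraproduct `P^{σ,ε,δ}_b f = ∑_I σ_I b_I ⟨f, h^δ_I⟩ h^ε_I`. -/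
def Psig (σ : D → ℝ) (e d : Bool) (b : D →₀ ℝ) (f : ℝ → ℝ) : ℝ → ℝ := fun x =>
  ∑ I ∈ b.support, σ I * (b I * ip f (hfun d I) * hfun e I x)

/-- The square of the `L²(ℝ)` norm, `‖g‖₂² = ∫ g²`. -/
def l2normSq (g : ℝ → ℝ) : ℝ := ∫ x, (g x) ^ 2

/-- The Carleson norm of a sequence `a` whose nonzero entries lie in the finite set `s`:
`sup_J (|J|⁻¹ ∑_{I ⊆ J} a_I² |I|)^{1/2}`. -/
def carlOn (s : Finset D) (a : D → ℝ) : ℝ :=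
  ⨆ J : D, Real.sqrt ((len J)⁻¹ *
    ∑ I ∈ s.filter (fun I => ival I ⊆ ival J), (a I) ^ 2 * len I)

/-- `μ` is the law of independent uniformly distributed random signs `{σ_I : I ∈ 𝒟}`. -/
def IsSignMeasure (μ : Measure (D → ℝ)) : Prop :=
  IsProbabilityMeasure μ ∧
    iIndepFun (m := fun _ : D => (inferInstance : MeasurableSpace ℝ)) (fun I σ => σ I) μ ∧
    ∀ I : D, μ.map (fun σ => σ I) =
      (2⁻¹ : ℝ≥0∞) • (Measure.dirac (1 : ℝ) + Measure.dirac (-1 : ℝ))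

/-- `f` is a unit vector of `L²(ℝ)`. -/
def UnitL2 (f : ℝ → ℝ) : Prop := MemLp f 2 volume ∧ eLpNorm f 2 volume = 1

/-- The operator norm on `L²(ℝ)` of a map defined on functions. -/
def opNorm (T : (ℝ → ℝ) → ℝ → ℝ) : ℝ :=
  ⨆ f : {f : ℝ → ℝ // UnitL2 f}, Real.sqrt (l2normSq (T f.1))

/-- The averaged operator norm `sup_{‖f‖₂ = 1} (𝔼 ‖T_σ f‖₂²)^{1/2}`. -/
def avgOpNorm (μ : Measure (D → ℝ)) (T : (D → ℝ) → (ℝ → ℝ) → ℝ → ℝ) : ℝ :=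
  ⨆ f : {f : ℝ → ℝ // UnitL2 f}, Real.sqrt (∫ σ, l2normSq (T σ f.1) ∂μ)

/-- `b` is the finite linear combination of Haar functions with coefficients `c`. -/
def FinHaar (b : ℝ → ℝ) (c : D →₀ ℝ) : Prop :=
  b = fun x => ∑ I ∈ c.support, c I * haar I x

/-- The paraproduct `P^{ε,γ}_{b,α} f = ∑_{I} (⟨b, h^α_I⟩/|I|^{1/2}) ⟨f, h^γ_I⟩ h^ε_I` with
function symbol `b`, the sum extended over a finite set `s` containing all the
nonvanishing terms. -/
def Pb (s : Finset D) (e g a : Bool) (b : ℝ → ℝ) (f : ℝ → ℝ) : ℝ → ℝ := fun x =>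
  ∑ I ∈ s, (ip b (hfun a I) / Real.sqrt (len I)) * ip f (hfun g I) * hfun e I x

lemma measurableSet_ival (I : D) : MeasurableSet (ival I) := measurableSet_Ico

lemma volume_ival_ne_top (I : D) : volume (ival I) ≠ ⊤ := by
  simp only [ival, Real.volume_Ico]; exact ENNReal.ofReal_ne_top

lemma memℒp_haar (I : D) : MemLp (haar I) 2 volume := by
  have h1 : MemLp ((ival (rc I)).indicator (fun _ => (1 : ℝ))) 2 volume :=
    memLp_indicator_const 2 (measurableSet_ival _) 1 (Or.inr (volume_ival_ne_top _))
  have h2 : MemLp ((ival (lc I)).indicator (fun _ => (1 : ℝ))) 2 volume :=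
    memLp_indicator_const 2 (measurableSet_ival _) 1 (Or.inr (volume_ival_ne_top _))
  exact ((h1.sub h2).const_mul ((Real.sqrt (len I))⁻¹))

/-- The Haar function `h_I` as an element of `L²(ℝ)`. -/
def haarLp (I : D) : Lp ℝ 2 (volume : Measure ℝ) := (memℒp_haar I).toLp (haar I)

/-- The random Haar multiplier `T_σ f = ∑_{I ∈ 𝒟} σ_I ⟨f, h_I⟩ h_I`, as an element of
`L²(ℝ)`; the (infinite) sum converges unconditionally in `L²`. -/
def Tfull (σ : D → ℝ) (g : ℝ → ℝ) : Lp ℝ 2 (volume : Measure ℝ) :=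
  ∑' I : D, (σ I * ip g (haar I)) • haarLp I

/-- The composition `M_b T_σ M_β` applied to `f`, as a function. -/
def MbTM (σ : D → ℝ) (b β f : ℝ → ℝ) : ℝ → ℝ := fun x =>
  b x * (Tfull σ fun y => β y * f y) x


/-! ### Dyadic geometry -/

lemma len_pos (I : D) : 0 < len I := zpow_pos (by norm_num) _

lemma sqrt_len_pos (I : D) : 0 < Real.sqrt (len I) := Real.sqrt_pos.2 (len_pos I)

lemma ival_nonempty (I : D) : (ival I).Nonempty := by
  refine Set.nonempty_Ico.2 ?_
  have := len_pos I
  simp only [len] at this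
  nlinarith

lemma vol_ival (I : D) : volume (ival I) = ENNReal.ofReal (len I) := by
  rw [ival, Real.volume_Ico]
  congr 1
  simp only [len]; ring

lemma vol_ival_toReal (I : D) : (volume (ival I)).toReal = len I := by
  rw [vol_ival, ENNReal.toReal_ofReal (len_pos I).le]

lemma two_zpow_sub_one (n : ℤ) : (2:ℝ) ^ (n - 1) * 2 = (2:ℝ) ^ n := by
  rw [zpow_sub₀ (two_ne_zero), zpow_one]
  field_simp

lemma ival_lc (I : D) : ival (lc I) =
    Set.Ico ((I.2 : ℝ) * (2:ℝ) ^ I.1) (((I.2:ℝ) * 2 + 1) * (2:ℝ) ^ (I.1 - 1)) := by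
  have ht := two_zpow_sub_one I.1
  have h1 : (0:ℝ) < (2:ℝ)^(I.1-1) := by positivity
  simp only [ival, lc]
  push_cast
  refine (Set.Ico_eq_Ico_iff (Or.inl (by nlinarith))).2 ⟨?_, ?_⟩
  · linear_combination (I.2:ℝ) * ht
  · ring

lemma ival_rc (I : D) : ival (rc I) =
    Set.Ico (((I.2:ℝ) * 2 + 1) * (2:ℝ) ^ (I.1 - 1)) (((I.2 : ℝ) + 1) * (2:ℝ) ^ I.1) := by
  have ht := two_zpow_sub_one I.1
  have h1 : (0:ℝ) < (2:ℝ)^(I.1-1) := by positivity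
  simp only [ival, rc]
  push_cast
  refine (Set.Ico_eq_Ico_iff (Or.inl (by nlinarith))).2 ⟨?_, ?_⟩
  · ring
  · linear_combination ((I.2:ℝ) + 1) * ht

lemma union_children (I : D) : ival (lc I) ∪ ival (rc I) = ival I := by
  rw [ival_lc, ival_rc, ival]
  have h1 : (0:ℝ) < (2:ℝ)^(I.1-1) := by positivity
  apply Set.Ico_union_Ico_eq_Ico
  · rw [← two_zpow_sub_one I.1]; nlinarith
  · rw [← two_zpow_sub_one I.1]; nlinarith

lemma disj_children (I : D) : ival (lc I) ∩ ival (rc I) = ∅ := by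
  rw [ival_lc, ival_rc]
  rw [Set.Ico_inter_Ico]
  exact Set.Ico_eq_empty (not_lt.2 ((min_le_left _ _).trans (le_max_right _ _)))

lemma lc_subset (I : D) : ival (lc I) ⊆ ival I := by
  rw [← union_children I]; exact Set.subset_union_left

lemma rc_subset (I : D) : ival (rc I) ⊆ ival I := by
  rw [← union_children I]; exact Set.subset_union_right

lemma len_lc (I : D) : len (lc I) = len I / 2 := by
  simp only [len, lc]
  rw [eq_div_iff (two_ne_zero)]
  exact two_zpow_sub_one I.1

lemma len_rc (I : D) : len (rc I) = len I / 2 := by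
  simp only [len, rc]
  rw [eq_div_iff (two_ne_zero)]
  exact two_zpow_sub_one I.1

lemma tri_aux {A B : D} (h : A.1 ≤ B.1) (hx : (ival A ∩ ival B).Nonempty) :
    ival A ⊆ ival B := by
  obtain ⟨x, hxA, hxB⟩ := hx
  simp only [ival, Set.mem_Ico] at hxA hxB
  set n := A.1 with hn; set m := B.1 with hm
  set a := A.2; set b := B.2
  set t : ℤ := 2 ^ (m - n).toNat with htdef
  have htpos : (0:ℤ) < t := pow_pos (by norm_num) _
  have h2n : (0:ℝ) < (2:ℝ) ^ n := by positivity
  have hmn : (2:ℝ) ^ m = (2:ℝ) ^ n * (t:ℤ) := by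
    rw [htdef]
    push_cast
    rw [← zpow_natCast (2:ℝ), Int.toNat_of_nonneg (by omega), ← zpow_add₀ (two_ne_zero)]
    congr 1; omega
  have r1 : (b:ℝ) * 2 ^ m < ((a:ℝ) + 1) * 2 ^ n := lt_of_le_of_lt hxB.1 hxA.2
  have r2 : (a:ℝ) * 2 ^ n < ((b:ℝ) + 1) * 2 ^ m := lt_of_le_of_lt hxA.1 hxB.2
  rw [hmn] at r1 r2
  have e1 : b * t ≤ a := by
    have : ((b * t : ℤ) : ℝ) < ((a : ℤ) : ℝ) + 1 := by push_cast; nlinarith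
    have h' : (b * t : ℤ) < a + 1 := by exact_mod_cast (by push_cast at this ⊢; linarith : ((b*t : ℤ):ℝ) < ((a+1 : ℤ):ℝ))
    omega
  have e2 : a + 1 ≤ (b + 1) * t := by
    have : ((a : ℤ) : ℝ) < (((b + 1) * t : ℤ) : ℝ) := by push_cast; nlinarith
    have h' : (a : ℤ) < (b + 1) * t := by exact_mod_cast this
    omega
  simp only [ival, ← hn, ← hm]
  apply Set.Ico_subset_Ico
  · rw [hmn]
    have : ((b * t : ℤ) : ℝ) ≤ ((a : ℤ) : ℝ) := by exact_mod_cast e1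
    push_cast at this
    nlinarith
  · rw [hmn]
    have : ((a + 1 : ℤ) : ℝ) ≤ (((b + 1) * t : ℤ) : ℝ) := by exact_mod_cast e2
    push_cast at this
    nlinarith

lemma trichotomy (A B : D) :
    ival A ⊆ ival B ∨ ival B ⊆ ival A ∨ ival A ∩ ival B = ∅ := by
  rcases Set.eq_empty_or_nonempty (ival A ∩ ival B) with he | hne
  · exact Or.inr (Or.inr he)
  · rcases le_total A.1 B.1 with h | h
    · exact Or.inl (tri_aux h hne)
    · exact Or.inr (Or.inl (tri_aux h (by rwa [Set.inter_comm] at hne)))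

lemma ival_inj {A B : D} (h : ival A = ival B) : A = B := by
  have hA := ival_nonempty A
  have h1 : (A.2:ℝ) * 2 ^ A.1 < ((A.2:ℝ) + 1) * 2 ^ A.1 := by
    have := len_pos A; simp only [len] at this; nlinarith
  obtain ⟨e1, e2⟩ := (Set.Ico_eq_Ico_iff (Or.inl h1)).1 h
  have hlen : (2:ℝ) ^ A.1 = (2:ℝ) ^ B.1 := by nlinarith [e1, e2]
  have hfst : A.1 = B.1 := by
    have h2 : (1:ℝ) < 2 := one_lt_two
    by_contra hne
    rcases lt_or_gt_of_ne hne with hlt | hlt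
    · exact absurd hlen (ne_of_lt (zpow_lt_zpow_right₀ h2 hlt))
    · exact absurd hlen.symm (ne_of_lt (zpow_lt_zpow_right₀ h2 hlt))
  have hsnd : A.2 = B.2 := by
    have h2n : (0:ℝ) < (2:ℝ) ^ A.1 := by positivity
    rw [← hfst] at e1
    have : (A.2:ℝ) = (B.2:ℝ) := by
      exact mul_right_cancel₀ h2n.ne' e1
    exact_mod_cast this
  exact Prod.ext hfst hsnd

lemma ssub_child {J I : D} (h : ival J ⊂ ival I) :
    ival J ⊆ ival (lc I) ∨ ival J ⊆ ival (rc I) := by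
  have hJI : ival J ⊆ ival I := subset_of_ssubset h
  have hne : ival J ≠ ival I := ne_of_ssubset h
  rcases trichotomy J (lc I) with h1 | h1 | h1
  · exact Or.inl h1
  · -- lc I ⊆ J
    rcases trichotomy J (rc I) with h2 | h2 | h2
    · -- J ⊆ rc I, but lc I ⊆ J ⊆ rc I contradicts disjointness & nonemptiness of lc I
      exfalso
      obtain ⟨x, hx⟩ := ival_nonempty (lc I)
      have : x ∈ ival (lc I) ∩ ival (rc I) := ⟨hx, h2 (h1 hx)⟩
      rw [disj_children] at this
      exact this
    · -- rc I ⊆ J too, so I ⊆ J, contradiction with strict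
      exfalso
      apply hne
      exact Set.Subset.antisymm hJI (by rw [← union_children I]; exact Set.union_subset h1 h2)
    · -- J disjoint from rc I: then J ⊆ lc I
      left
      intro x hx
      have hxI : x ∈ ival I := hJI hx
      rw [← union_children I] at hxI
      rcases hxI with h' | h'
      · exact h'
      · exact absurd (⟨hx, h'⟩ : x ∈ ival J ∩ ival (rc I)) (Set.eq_empty_iff_forall_notMem.1 h2 x)
  · -- J disjoint from lc I: J ⊆ rc I
    right
    intro x hx
    have hxI : x ∈ ival I := hJI hx
    rw [← union_children I] at hxI
    rcases hxI with h' | h'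
    · exact absurd (⟨hx, h'⟩ : x ∈ ival J ∩ ival (lc I)) (Set.eq_empty_iff_forall_notMem.1 h1 x)
    · exact h'

/-! ### Indicator integrals -/

/-- The indicator function of a dyadic interval. -/
def ind (A : D) : ℝ → ℝ := (ival A).indicator (fun _ => (1 : ℝ))

/-- The (real) volume of the intersection of two dyadic intervals. -/
def vv (A B : D) : ℝ := (volume (ival A ∩ ival B)).toReal

lemma integrable_ind (A : D) : Integrable (ind A) volume := by
  rw [ind, integrable_indicator_iff (measurableSet_ival A)]
  exact (integrableOn_const_iff (C := (1:ℝ))).2 (Or.inr (lt_of_le_of_ne (le_top) (volume_ival_ne_top A)).lt_top)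

lemma integrable_ind_mul_ind (A B : D) : Integrable (fun x => ind A x * ind B x) volume := by
  have : (fun x => ind A x * ind B x) = (ival A ∩ ival B).indicator (fun _ => (1:ℝ)) := by
    funext x
    rw [ind, ind, ← Set.inter_indicator_mul]
    simp
  rw [this, integrable_indicator_iff ((measurableSet_ival A).inter (measurableSet_ival B))]
  refine (integrableOn_const_iff (C := (1:ℝ))).2 (Or.inr ?_)
  exact lt_of_le_of_lt (measure_mono Set.inter_subset_left)
    (lt_of_le_of_ne le_top (volume_ival_ne_top A)).lt_top

lemma integral_ind_mul_ind (A B : D) : ∫ x, ind A x * ind B x = vv A B := by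
  have : (fun x => ind A x * ind B x) = (ival A ∩ ival B).indicator (fun _ => (1:ℝ)) := by
    funext x
    rw [ind, ind, ← Set.inter_indicator_mul]
    simp
  rw [this, integral_indicator_const (1:ℝ) ((measurableSet_ival A).inter (measurableSet_ival B)),
    smul_eq_mul, mul_one, vv]
  rfl

lemma vv_comm (A B : D) : vv A B = vv B A := by rw [vv, vv, Set.inter_comm]

lemma vv_of_subset {A B : D} (h : ival A ⊆ ival B) : vv A B = len A := by
  rw [vv, Set.inter_eq_self_of_subset_left h, vol_ival_toReal]

lemma vv_of_disj {A B : D} (h : ival A ∩ ival B = ∅) : vv A B = 0 := by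
  rw [vv, h]; simp

lemma vv_of_disj' {A B : D} (h : ival B ∩ ival A = ∅) : vv A B = 0 := by
  rw [vv_comm]; exact vv_of_disj h

/-- Expand the integral of a product of differences of indicators. -/
lemma integral_diff_mul_diff (A B A' B' : D) :
    ∫ x, (ind A x - ind B x) * (ind A' x - ind B' x) =
      vv A A' - vv A B' - vv B A' + vv B B' := by
  have hAA' := integrable_ind_mul_ind A A'
  have hAB' := integrable_ind_mul_ind A B'
  have hBA' := integrable_ind_mul_ind B A'
  have hBB' := integrable_ind_mul_ind B B'
  have : (fun x => (ind A x - ind B x) * (ind A' x - ind B' x)) =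
      fun x => ((ind A x * ind A' x - ind A x * ind B' x) - ind B x * ind A' x)
        + ind B x * ind B' x := by
    funext x; ring
  have h1 : Integrable (fun x => ind A x * ind A' x - ind A x * ind B' x) volume := hAA'.sub hAB'
  have h2 : Integrable (fun x => ind A x * ind A' x - ind A x * ind B' x - ind B x * ind A' x)
    volume := h1.sub hBA'
  rw [this, integral_add h2 hBB', integral_sub h1 hBA', integral_sub hAA' hAB',
    integral_ind_mul_ind, integral_ind_mul_ind, integral_ind_mul_ind, integral_ind_mul_ind]

lemma integral_ind_mul_diff (A A' B' : D) :
    ∫ x, ind A x * (ind A' x - ind B' x) = vv A A' - vv A B' := by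
  have hAA' := integrable_ind_mul_ind A A'
  have hAB' := integrable_ind_mul_ind A B'
  have : (fun x => ind A x * (ind A' x - ind B' x)) =
      fun x => ind A x * ind A' x - ind A x * ind B' x := by
    funext x; ring
  rw [this, integral_sub hAA' hAB', integral_ind_mul_ind, integral_ind_mul_ind]

/-! ### Haar inner products -/

lemma inter_empty_of_subsets {S T U V : Set ℝ} (hS : S ⊆ U) (hT : T ⊆ V) (h : U ∩ V = ∅) :
    S ∩ T = ∅ :=
  Set.eq_empty_of_subset_empty (h ▸ Set.inter_subset_inter hS hT)

lemma ip_comm (f g : ℝ → ℝ) : ip f g = ip g f := by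
  unfold ip; simp_rw [mul_comm]

lemma ip_haar_eq (I J : D) : ip (haar I) (haar J) =
    (Real.sqrt (len I))⁻¹ * (Real.sqrt (len J))⁻¹ *
      (vv (rc I) (rc J) - vv (rc I) (lc J) - vv (lc I) (rc J) + vv (lc I) (lc J)) := by
  have hrw : (fun x => haar I x * haar J x) = fun x =>
      (Real.sqrt (len I))⁻¹ * (Real.sqrt (len J))⁻¹ *
        ((ind (rc I) x - ind (lc I) x) * (ind (rc J) x - ind (lc J) x)) := by
    funext x; simp only [haar, ind]; ring
  rw [ip, hrw, integral_const_mul _ _, integral_diff_mul_diff]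

lemma ip_haar1_eq (J I : D) : ip (haar1 J) (haar I) =
    (Real.sqrt (len J))⁻¹ * (Real.sqrt (len I))⁻¹ * (vv J (rc I) - vv J (lc I)) := by
  have hrw : (fun x => haar1 J x * haar I x) = fun x =>
      (Real.sqrt (len J))⁻¹ * (Real.sqrt (len I))⁻¹ *
        (ind J x * (ind (rc I) x - ind (lc I) x)) := by
    funext x; simp only [haar1, haar, ind]; ring
  rw [ip, hrw, integral_const_mul _ _, integral_ind_mul_diff]

lemma inv_sqrt_sq (I : D) : ((Real.sqrt (len I))⁻¹)^2 = (len I)⁻¹ := by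
  rw [← Real.sqrt_inv, Real.sq_sqrt (inv_nonneg.2 (len_pos I).le)]

lemma ip_haar_self (I : D) : ip (haar I) (haar I) = 1 := by
  rw [ip_haar_eq, vv_of_subset (subset_refl _), vv_of_subset (subset_refl _),
    vv_of_disj' (disj_children I), vv_of_disj (disj_children I), len_rc, len_lc]
  have hs := sqrt_len_pos I
  have hm := Real.mul_self_sqrt (len_pos I).le
  field_simp
  linarith

lemma ip_haar_zero {I J : D} (h : ival I ⊂ ival J) : ip (haar I) (haar J) = 0 := by
  rw [ip_haar_eq]
  rcases ssub_child h with hc | hc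
  · have h1 : vv (rc I) (rc J) = 0 :=
      vv_of_disj (inter_empty_of_subsets ((rc_subset I).trans hc) (subset_refl _)
        (disj_children J))
    have h2 : vv (rc I) (lc J) = len (rc I) := vv_of_subset ((rc_subset I).trans hc)
    have h3 : vv (lc I) (rc J) = 0 :=
      vv_of_disj (inter_empty_of_subsets ((lc_subset I).trans hc) (subset_refl _)
        (disj_children J))
    have h4 : vv (lc I) (lc J) = len (lc I) := vv_of_subset ((lc_subset I).trans hc)
    rw [h1, h2, h3, h4, len_rc, len_lc]
    ring
  · have h1 : vv (rc I) (rc J) = len (rc I) := vv_of_subset ((rc_subset I).trans hc)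
    have h2 : vv (rc I) (lc J) = 0 := by
      refine vv_of_disj ?_
      rw [Set.inter_comm]
      exact inter_empty_of_subsets (subset_refl _) ((rc_subset I).trans hc) (disj_children J)
    have h3 : vv (lc I) (rc J) = len (lc I) := vv_of_subset ((lc_subset I).trans hc)
    have h4 : vv (lc I) (lc J) = 0 := by
      refine vv_of_disj ?_
      rw [Set.inter_comm]
      exact inter_empty_of_subsets (subset_refl _) ((lc_subset I).trans hc) (disj_children J)
    rw [h1, h2, h3, h4, len_rc, len_lc]
    ring

lemma ip_haar_haar (I J : D) : ip (haar I) (haar J) = if I = J then 1 else 0 := by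
  by_cases hIJ : I = J
  · rw [if_pos hIJ, hIJ, ip_haar_self]
  · rw [if_neg hIJ]
    rcases trichotomy I J with h | h | h
    · exact ip_haar_zero (ssubset_of_subset_of_ne h (fun he => hIJ (ival_inj he)))
    · rw [ip_comm]
      exact ip_haar_zero (ssubset_of_subset_of_ne h (fun he => hIJ (ival_inj he.symm)))
    · rw [ip_haar_eq]
      have hz : ∀ (A B : D), ival A ⊆ ival I → ival B ⊆ ival J → vv A B = 0 := fun A B hA hB =>
        vv_of_disj (inter_empty_of_subsets hA hB h)
      rw [hz _ _ (rc_subset I) (rc_subset J), hz _ _ (rc_subset I) (lc_subset J),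
        hz _ _ (lc_subset I) (rc_subset J), hz _ _ (lc_subset I) (lc_subset J)]
      ring

lemma sq_ip_haar1_haar (J I : D) : (ip (haar1 J) (haar I))^2 =
    if ival J ⊂ ival I then len J / len I else 0 := by
  have hsJ := sqrt_len_pos J
  have hsI := sqrt_len_pos I
  have hmJ := Real.mul_self_sqrt (len_pos J).le
  have hmI := Real.mul_self_sqrt (len_pos I).le
  by_cases h : ival J ⊂ ival I
  · rw [if_pos h, ip_haar1_eq]
    rcases ssub_child h with hc | hc
    · have h1 : vv J (rc I) = 0 :=
        vv_of_disj (inter_empty_of_subsets hc (subset_refl _) (disj_children I))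
      have h2 : vv J (lc I) = len J := vv_of_subset hc
      rw [h1, h2]
      have e1 := inv_sqrt_sq J
      have e2 := inv_sqrt_sq I
      calc ((Real.sqrt (len J))⁻¹ * (Real.sqrt (len I))⁻¹ * (0 - len J))^2
          = ((Real.sqrt (len J))⁻¹)^2 * ((Real.sqrt (len I))⁻¹)^2 * (len J)^2 := by ring
        _ = (len J)⁻¹ * (len I)⁻¹ * (len J)^2 := by rw [e1, e2]
        _ = len J / len I := by
            have hJ : len J ≠ 0 := (len_pos J).ne'
            have hI : len I ≠ 0 := (len_pos I).ne'
            field_simp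
    · have h1 : vv J (rc I) = len J := vv_of_subset hc
      have h2 : vv J (lc I) = 0 := by
        refine vv_of_disj ?_
        rw [Set.inter_comm]
        exact inter_empty_of_subsets (subset_refl _) hc (disj_children I)
      rw [h1, h2]
      have e1 := inv_sqrt_sq J
      have e2 := inv_sqrt_sq I
      calc ((Real.sqrt (len J))⁻¹ * (Real.sqrt (len I))⁻¹ * (len J - 0))^2
          = ((Real.sqrt (len J))⁻¹)^2 * ((Real.sqrt (len I))⁻¹)^2 * (len J)^2 := by ring
        _ = (len J)⁻¹ * (len I)⁻¹ * (len J)^2 := by rw [e1, e2]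
        _ = len J / len I := by
            have hJ : len J ≠ 0 := (len_pos J).ne'
            have hI : len I ≠ 0 := (len_pos I).ne'
            field_simp
  · rw [if_neg h, ip_haar1_eq]
    rcases trichotomy I J with h' | h' | h'
    · -- ival I ⊆ ival J : children of I are inside J
      rw [vv_comm J (rc I), vv_comm J (lc I),
        vv_of_subset ((rc_subset I).trans h'), vv_of_subset ((lc_subset I).trans h'),
        len_rc, len_lc]
      ring
    · -- ival J ⊆ ival I but not strict: equal, so I ⊆ J as well
      have he : ival J = ival I := Set.Subset.antisymm h' (by
        by_contra hns
        exact h (ssubset_of_subset_of_ne h' (fun hh => hns (hh ▸ subset_refl _))))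
      have hIJ : ival I ⊆ ival J := he ▸ subset_refl _
      rw [vv_comm J (rc I), vv_comm J (lc I),
        vv_of_subset ((rc_subset I).trans hIJ), vv_of_subset ((lc_subset I).trans hIJ),
        len_rc, len_lc]
      ring
    · have hz : ∀ (A : D), ival A ⊆ ival I → vv J A = 0 := fun A hA => by
        rw [vv_comm]
        exact vv_of_disj (inter_empty_of_subsets hA (subset_refl _) h')
      rw [hz _ (rc_subset I), hz _ (lc_subset I)]
      ring

/-! ### L² machinery -/

lemma memℒp_haar1 (J : D) : MemLp (haar1 J) 2 volume := by
  have h1 : MemLp ((ival J).indicator (fun _ => (1 : ℝ))) 2 volume :=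
    memLp_indicator_const 2 (measurableSet_ival _) 1 (Or.inr (volume_ival_ne_top _))
  exact h1.const_mul _

lemma integrable_mul_memℒp {f g : ℝ → ℝ} (hf : MemLp f 2 volume) (hg : MemLp g 2 volume) :
    Integrable (fun x => f x * g x) volume := by
  have h := L2.integrable_inner (𝕜 := ℝ) (hf.toLp f) (hg.toLp g)
  refine (integrable_congr ?_).mp h
  filter_upwards [hf.coeFn_toLp, hg.coeFn_toLp] with x h1 h2
  simp only [RCLike.inner_apply, conj_trivial]
  rw [h1, h2, mul_comm]

/-- Expansion of `ip` against a finite sum of scaled functions. -/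
lemma ip_sum_left (s : Finset D) (c : D → ℝ) (φ : D → ℝ → ℝ) (g : ℝ → ℝ)
    (h : ∀ J ∈ s, Integrable (fun x => φ J x * g x) volume) :
    ip (fun x => ∑ J ∈ s, c J * φ J x) g = ∑ J ∈ s, c J * ip (φ J) g := by
  unfold ip
  have hrw : (fun x => (∑ J ∈ s, c J * φ J x) * g x) =
      fun x => ∑ J ∈ s, c J * (φ J x * g x) := by
    funext x
    rw [Finset.sum_mul]
    exact Finset.sum_congr rfl fun J _ => by ring
  rw [hrw, integral_finset_sum]
  · exact Finset.sum_congr rfl fun J hJ => by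
      rw [integral_const_mul _ _]
  · exact fun J hJ => (h J hJ).const_mul _

/-- `l2normSq` of a finite Haar expansion. -/
lemma l2normSq_haar_sum (s : Finset D) (c : D → ℝ) :
    l2normSq (fun x => ∑ I ∈ s, c I * haar I x) = ∑ I ∈ s, (c I)^2 := by
  unfold l2normSq
  have hrw : (fun x => (∑ I ∈ s, c I * haar I x)^2) =
      fun x => ∑ I ∈ s, ∑ I' ∈ s, (c I * c I') * (haar I x * haar I' x) := by
    funext x
    rw [sq, Finset.sum_mul_sum]
    exact Finset.sum_congr rfl fun I _ => Finset.sum_congr rfl fun I' _ => by ring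
  rw [hrw, integral_finset_sum]
  · have : ∀ I ∈ s, (∫ x, ∑ I' ∈ s, (c I * c I') * (haar I x * haar I' x)) = (c I)^2 := by
      intro I hI
      rw [integral_finset_sum]
      · have : ∀ I' ∈ s, (∫ x, (c I * c I') * (haar I x * haar I' x)) =
            if I' = I then (c I)^2 else 0 := by
          intro I' hI'
          rw [integral_const_mul _ _]
          have : (∫ x, haar I x * haar I' x) = if I = I' then 1 else 0 := ip_haar_haar I I'
          rw [this]
          by_cases h : I' = I
          · subst h; simp [sq]
          · rw [if_neg (fun hh => h hh.symm), if_neg h, mul_zero]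
        rw [Finset.sum_congr rfl this, Finset.sum_ite_eq' s I (fun _ => (c I)^2), if_pos hI]
      · exact fun I' _ =>
          (integrable_mul_memℒp (memℒp_haar I) (memℒp_haar I')).const_mul _
    rw [Finset.sum_congr rfl this]
  · intro I hI
    exact integrable_finset_sum s fun I' _ =>
      (integrable_mul_memℒp (memℒp_haar I) (memℒp_haar I')).const_mul _

/-! ### Probability: moments of sign vectors -/

section Signs

variable {μ : Measure (D → ℝ)}

lemma sign_ae_pm (hμ : IsSignMeasure μ) (J : D) : ∀ᵐ σ ∂μ, σ J = 1 ∨ σ J = -1 := by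
  have hmap := hμ.2.2 J
  have hmeas : MeasurableSet ({1, -1}ᶜ : Set ℝ) := (by measurability)
  have h0 : μ ((fun σ : D → ℝ => σ J) ⁻¹' ({1, -1}ᶜ : Set ℝ)) = 0 := by
    rw [← Measure.map_apply (measurable_pi_apply J) hmeas, hmap]
    simp only [Measure.smul_apply, Measure.add_apply, smul_eq_mul]
    rw [Measure.dirac_apply' _ hmeas, Measure.dirac_apply' _ hmeas]
    simp
  rw [ae_iff]
  have hset : {σ : D → ℝ | ¬(σ J = 1 ∨ σ J = -1)} =
      (fun σ : D → ℝ => σ J) ⁻¹' ({1, -1}ᶜ : Set ℝ) := by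
    ext σ
    simp only [Set.mem_setOf_eq, Set.mem_preimage, Set.mem_compl_iff, Set.mem_insert_iff,
      Set.mem_singleton_iff]
  rw [hset]
  exact h0

lemma integrable_sign_mul (hμ : IsSignMeasure μ) (J J' : D) : Integrable (fun σ => σ J * σ J') μ := by
  haveI : IsProbabilityMeasure μ := hμ.1
  refine Integrable.mono' (integrable_const (1:ℝ))
    (((measurable_pi_apply J).mul (measurable_pi_apply J')).aestronglyMeasurable) ?_
  filter_upwards [sign_ae_pm hμ J, sign_ae_pm hμ J'] with σ h1 h2
  rcases h1 with h1 | h1 <;> rcases h2 with h2 | h2 <;> simp [h1, h2]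

lemma integral_sign (hμ : IsSignMeasure μ) (J : D) : ∫ σ, σ J ∂μ = 0 := by
  have hmap := hμ.2.2 J
  have h : ∫ x : ℝ, x ∂(μ.map (fun σ => σ J)) = ∫ σ, σ J ∂μ  :=
    integral_map (φ := fun σ : D → ℝ => σ J) (f := fun x : ℝ => x)
      (measurable_pi_apply J).aemeasurable
      measurable_id.aemeasurable.aestronglyMeasurable
  rw [← h, hmap, integral_smul_measure, integral_add_measure
    ((integrable_const (1:ℝ)).congr (ae_eq_dirac (fun x : ℝ => x)).symm)
    ((integrable_const (-1:ℝ)).congr (ae_eq_dirac (fun x : ℝ => x)).symm),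
    integral_dirac, integral_dirac]
  simp

lemma integral_sign_mul (hμ : IsSignMeasure μ) (J J' : D) :
    ∫ σ, σ J * σ J' ∂μ = if J = J' then 1 else 0 := by
  haveI : IsProbabilityMeasure μ := hμ.1
  by_cases h : J = J'
  · subst h
    rw [if_pos rfl]
    have : (fun σ : D → ℝ => σ J * σ J) =ᵐ[μ] fun _ => (1:ℝ) := by
      filter_upwards [sign_ae_pm hμ J] with σ h1
      rcases h1 with h1 | h1 <;> simp [h1]
    rw [integral_congr_ae this]
    simp
  · rw [if_neg h]
    have hind : ProbabilityTheory.IndepFun (fun σ : D → ℝ => σ J) (fun σ => σ J') μ :=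
      hμ.2.1.indepFun h
    rw [show (fun σ : D → ℝ => σ J * σ J') =
      (fun σ : D → ℝ => σ J) * fun σ => σ J' from rfl]
    rw [IndepFun.integral_mul_eq_mul_integral hind (measurable_pi_apply J).aestronglyMeasurable
      (measurable_pi_apply J').aestronglyMeasurable, integral_sign hμ, zero_mul]

/-- Second moment of a random sign combination. -/
lemma integral_sq_sign_sum (hμ : IsSignMeasure μ) (t : Finset D) (v : D → ℝ) :
    ∫ σ, (∑ J ∈ t, σ J * v J)^2 ∂μ = ∑ J ∈ t, (v J)^2 := by
  have hrw : (fun σ : D → ℝ => (∑ J ∈ t, σ J * v J)^2) =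
      fun σ => ∑ J ∈ t, ∑ J' ∈ t, (v J * v J') * (σ J * σ J') := by
    funext σ
    rw [sq, Finset.sum_mul_sum]
    exact Finset.sum_congr rfl fun J _ => Finset.sum_congr rfl fun J' _ => by ring
  rw [hrw, integral_finset_sum _ (fun J _ => integrable_finset_sum _
    (fun J' _ => ((integrable_sign_mul hμ J J').const_mul _)))]
  refine Finset.sum_congr rfl fun J hJ => ?_
  rw [integral_finset_sum _ (fun J' _ => ((integrable_sign_mul hμ J J').const_mul _))]
  have : ∀ J' ∈ t, (∫ σ, (v J * v J') * (σ J * σ J') ∂μ) =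
      if J' = J then (v J)^2 else 0 := by
    intro J' _
    rw [integral_const_mul _ _, integral_sign_mul hμ]
    by_cases h : J' = J
    · subst h; simp [sq]
    · rw [if_neg (fun hh => h hh.symm), if_neg h, mul_zero]
  rw [Finset.sum_congr rfl this, Finset.sum_ite_eq' t J (fun _ => (v J)^2), if_pos hJ]

end Signs

/-! ### Unit vectors and Bessel -/

lemma inner_haarLp (I J : D) : (inner ℝ (haarLp I) (haarLp J) : ℝ) = ip (haar I) (haar J) := by
  rw [L2.inner_def, ip]
  refine integral_congr_ae ?_
  filter_upwards [(memℒp_haar I).coeFn_toLp, (memℒp_haar J).coeFn_toLp] with x h1 h2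
  simp only [RCLike.inner_apply, conj_trivial, haarLp]
  rw [h1, h2, mul_comm]

lemma orthonormal_haarLp : Orthonormal ℝ haarLp := by
  rw [orthonormal_iff_ite]
  intro I J
  rw [inner_haarLp, ip_haar_haar]

lemma unitL2_haar (J : D) : UnitL2 (haar J) := by
  refine ⟨memℒp_haar J, ?_⟩
  have hn : ‖haarLp J‖^2 = 1 := by
    rw [← real_inner_self_eq_norm_sq, inner_haarLp, ip_haar_self]
  have hn1 : ‖haarLp J‖ = 1 := by
    nlinarith [norm_nonneg (haarLp J)]
  rw [Lp.norm_def] at hn1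
  have he : eLpNorm (haarLp J : ℝ → ℝ) 2 volume = eLpNorm (haar J) 2 volume :=
    eLpNorm_congr_ae (memℒp_haar J).coeFn_toLp
  rw [he] at hn1
  exact (ENNReal.toReal_eq_toReal_iff' ((memℒp_haar J).2.ne) ENNReal.one_ne_top).mp
    (by simpa using hn1)

lemma bessel {f : ℝ → ℝ} (hf : UnitL2 f) (s : Finset D) :
    ∑ J ∈ s, (ip f (haar J))^2 ≤ 1 := by
  set F := hf.1.toLp f with hF
  have hnorm : ‖F‖ = 1 := by
    rw [Lp.norm_def, eLpNorm_congr_ae hf.1.coeFn_toLp, hf.2]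
    simp
  have hip : ∀ J, (inner ℝ (haarLp J) F : ℝ) = ip f (haar J) := by
    intro J
    rw [L2.inner_def, ip_comm f (haar J), ip]
    refine integral_congr_ae ?_
    filter_upwards [(memℒp_haar J).coeFn_toLp, hf.1.coeFn_toLp] with x h1 h2
    simp only [RCLike.inner_apply, conj_trivial, haarLp]
    rw [h1, h2, mul_comm]
  have hb := Orthonormal.sum_inner_products_le (𝕜 := ℝ) (s := s) F orthonormal_haarLp
  rw [hnorm] at hb
  simp only [one_pow] at hb
  refine le_trans (le_of_eq ?_) hb
  refine Finset.sum_congr rfl fun J _ => ?_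
  rw [hip J, Real.norm_eq_abs, sq_abs]

/-! ### Main computation -/

lemma integrable_sq_sign_sum {μ : Measure (D → ℝ)} (hμ : IsSignMeasure μ)
    (t : Finset D) (v : D → ℝ) :
    Integrable (fun σ => (∑ J ∈ t, σ J * v J)^2) μ := by
  have hrw : (fun σ : D → ℝ => (∑ J ∈ t, σ J * v J)^2) =
      fun σ => ∑ J ∈ t, ∑ J' ∈ t, (v J * v J') * (σ J * σ J') := by
    funext σ
    rw [sq, Finset.sum_mul_sum]
    exact Finset.sum_congr rfl fun J _ => Finset.sum_congr rfl fun J' _ => by ring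
  rw [hrw]
  exact integrable_finset_sum _ fun J _ => integrable_finset_sum _
    fun J' _ => (integrable_sign_mul hμ J J').const_mul _

lemma main_integral {μ : Measure (D → ℝ)} (hμ : IsSignMeasure μ) (b β : D →₀ ℝ)
    {f : ℝ → ℝ} (hf : MemLp f 2 volume) :
    ∫ σ, l2normSq (P false false b (Psig σ true false β f)) ∂μ =
      ∑ J ∈ β.support, ((β J)^2 * len J *
        ∑ I ∈ b.support.filter (fun I => ival J ⊂ ival I), (b I)^2 / len I) *
        (ip f (haar J))^2 := by
  set w : D → D → ℝ := fun J I => β J * ip f (haar J) * ip (haar1 J) (haar I) with hw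
  have hPsig : ∀ (σ : D → ℝ) (I : D),
      ip (Psig σ true false β f) (haar I) = ∑ J ∈ β.support, σ J * w J I := by
    intro σ I
    have h1 : Psig σ true false β f =
        fun x => ∑ J ∈ β.support, (σ J * (β J * ip f (haar J))) * haar1 J x := by
      funext x
      unfold Psig
      simp only [hfun]
      exact Finset.sum_congr rfl fun J _ => by ring
    rw [h1, ip_sum_left _ _ _ _ (fun J _ => integrable_mul_memℒp (memℒp_haar1 J) (memℒp_haar I))]
    exact Finset.sum_congr rfl fun J _ => by simp only [hw]; ring
  have hP : ∀ σ : D → ℝ, l2normSq (P false false b (Psig σ true false β f)) =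
      ∑ I ∈ b.support, (b I)^2 * (∑ J ∈ β.support, σ J * w J I)^2 := by
    intro σ
    have h2 : P false false b (Psig σ true false β f) =
        fun x => ∑ I ∈ b.support, (b I * ip (Psig σ true false β f) (haar I)) * haar I x := by
      funext x
      unfold P
      simp only [hfun]
    rw [h2, l2normSq_haar_sum]
    exact Finset.sum_congr rfl fun I _ => by rw [hPsig σ I]; ring
  rw [integral_congr_ae (Filter.Eventually.of_forall hP),
    integral_finset_sum _ (fun I _ => (integrable_sq_sign_sum hμ β.support (fun J => w J I)).const_mul _)]
  have hI : ∀ I ∈ b.support, (∫ σ, (b I)^2 * (∑ J ∈ β.support, σ J * w J I)^2 ∂μ) =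
      ∑ J ∈ β.support, (b I)^2 * (w J I)^2 := by
    intro I _
    rw [integral_const_mul _ _, integral_sq_sign_sum hμ, Finset.mul_sum]
  rw [Finset.sum_congr rfl hI, Finset.sum_comm]
  refine Finset.sum_congr rfl fun J _ => ?_
  have hterm : ∀ I ∈ b.support, (b I)^2 * (w J I)^2 =
      (if ival J ⊂ ival I then (β J)^2 * len J * ((b I)^2 / len I) else 0)
        * (ip f (haar J))^2 := by
    intro I _
    have : (w J I)^2 = (β J)^2 * (ip f (haar J))^2 * (ip (haar1 J) (haar I))^2 := by
      simp only [hw]; ring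
    rw [this, sq_ip_haar1_haar]
    by_cases h : ival J ⊂ ival I
    · rw [if_pos h, if_pos h]
      field_simp
    · rw [if_neg h, if_neg h]
      ring
  rw [Finset.sum_congr rfl hterm, ← Finset.sum_mul, ← Finset.sum_filter, ← Finset.mul_sum]

instance : Nonempty {f : ℝ → ℝ // UnitL2 f} := ⟨⟨haar ((0:ℤ), (0:ℤ)), unitL2_haar _⟩⟩

/-- Exact formula for the averaged operator norm of `P^{0,0}_b P^{σ,1,0}_β`. -/
theorem statement9 (b β : D →₀ ℝ) (μ : Measure (D → ℝ)) (hμ : IsSignMeasure μ) :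
    avgOpNorm μ (fun σ f => P false false b (Psig σ true false β f)) =
      ⨆ J : D, Real.sqrt ((β J) ^ 2 * len J *
        ∑ I ∈ b.support.filter (fun I => ival J ⊂ ival I), (b I) ^ 2 / len I) := by
  set K : D → ℝ := fun J => (β J) ^ 2 * len J *
    ∑ I ∈ b.support.filter (fun I => ival J ⊂ ival I), (b I) ^ 2 / len I with hK
  have hK0 : ∀ J, 0 ≤ K J := by
    intro J
    refine mul_nonneg (mul_nonneg (sq_nonneg _) (len_pos J).le) ?_
    exact Finset.sum_nonneg fun I _ => div_nonneg (sq_nonneg _) (len_pos I).le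
  have hKz : ∀ J, J ∉ β.support → K J = 0 := by
    intro J hJ
    simp only [hK, Finsupp.notMem_support_iff.1 hJ]
    ring
  have hbddK : BddAbove (Set.range K) := by
    refine Set.Finite.bddAbove (Set.Finite.subset
      (((β.support.finite_toSet).image K).insert 0) ?_)
    rintro y ⟨J, rfl⟩
    by_cases h : J ∈ β.support
    · exact Set.mem_insert_of_mem _ ⟨J, h, rfl⟩
    · rw [hKz J h]; exact Set.mem_insert _ _
  have hsupK0 : 0 ≤ ⨆ J, K J := le_ciSup_of_le hbddK ((0:ℤ),(0:ℤ)) (hK0 _)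
  -- the function inside the averaged operator norm, for a unit vector f
  have hG : ∀ f : {f : ℝ → ℝ // UnitL2 f},
      (∫ σ, l2normSq (P false false b (Psig σ true false β f.1)) ∂μ) =
        ∑ J ∈ β.support, K J * (ip f.1 (haar J))^2 :=
    fun f => main_integral hμ b β f.2.1
  have hGle : ∀ f : {f : ℝ → ℝ // UnitL2 f},
      (∑ J ∈ β.support, K J * (ip f.1 (haar J))^2) ≤ ⨆ J, K J := by
    intro f
    calc ∑ J ∈ β.support, K J * (ip f.1 (haar J))^2
        ≤ ∑ J ∈ β.support, (⨆ J', K J') * (ip f.1 (haar J))^2 :=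
          Finset.sum_le_sum fun J _ =>
            mul_le_mul_of_nonneg_right (le_ciSup hbddK J) (sq_nonneg _)
      _ = (⨆ J', K J') * ∑ J ∈ β.support, (ip f.1 (haar J))^2 := by rw [Finset.mul_sum]
      _ ≤ (⨆ J', K J') * 1 := mul_le_mul_of_nonneg_left (bessel f.2 _) hsupK0
      _ = ⨆ J', K J' := mul_one _
  -- equality for the sup of square roots
  have hbddsq : BddAbove (Set.range fun J => Real.sqrt (K J)) := by
    refine ⟨Real.sqrt (⨆ J, K J), ?_⟩
    rintro y ⟨J, rfl⟩
    exact Real.sqrt_le_sqrt (le_ciSup hbddK J)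
  have hsq : (⨆ J, Real.sqrt (K J)) = Real.sqrt (⨆ J, K J) := by
    refine le_antisymm (ciSup_le fun J => Real.sqrt_le_sqrt (le_ciSup hbddK J)) ?_
    have h1 : 0 ≤ ⨆ J, Real.sqrt (K J) :=
      le_ciSup_of_le hbddsq ((0:ℤ),(0:ℤ)) (Real.sqrt_nonneg _)
    have h2 : (⨆ J, K J) ≤ (⨆ J, Real.sqrt (K J))^2 := by
      refine ciSup_le fun J => ?_
      have : K J = (Real.sqrt (K J))^2 := (Real.sq_sqrt (hK0 J)).symm
      rw [this]
      exact pow_le_pow_left₀ (Real.sqrt_nonneg _) (le_ciSup hbddsq J) 2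
    calc Real.sqrt (⨆ J, K J) ≤ Real.sqrt ((⨆ J, Real.sqrt (K J))^2) := Real.sqrt_le_sqrt h2
      _ = ⨆ J, Real.sqrt (K J) := Real.sqrt_sq h1
  rw [show (⨆ J : D, Real.sqrt ((β J) ^ 2 * len J *
      ∑ I ∈ b.support.filter (fun I => ival J ⊂ ival I), (b I) ^ 2 / len I)) =
      ⨆ J, Real.sqrt (K J) from rfl, hsq]
  unfold avgOpNorm
  have hbddG : BddAbove (Set.range fun f : {f : ℝ → ℝ // UnitL2 f} =>
      Real.sqrt (∫ σ, l2normSq (P false false b (Psig σ true false β f.1)) ∂μ)) := by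
    refine ⟨Real.sqrt (⨆ J, K J), ?_⟩
    rintro y ⟨f, rfl⟩
    dsimp only
    rw [hG f]
    exact Real.sqrt_le_sqrt (hGle f)
  refine le_antisymm (ciSup_le fun f => by rw [hG f]; exact Real.sqrt_le_sqrt (hGle f)) ?_
  rw [← hsq]
  refine ciSup_le fun J => ?_
  by_cases hJ : J ∈ β.support
  · have hval : (∫ σ, l2normSq (P false false b
        (Psig σ true false β (haar J))) ∂μ) = K J := by
      rw [main_integral hμ b β (memℒp_haar J)]
      have : ∀ J' ∈ β.support, K J' * (ip (haar J) (haar J'))^2 =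
          if J' = J then K J else 0 := by
        intro J' _
        rw [ip_haar_haar]
        by_cases h : J' = J
        · subst h; simp
        · rw [if_neg (fun hh => h hh.symm), if_neg h]
          ring
      rw [Finset.sum_congr rfl this, Finset.sum_ite_eq' _ J (fun _ => K J), if_pos hJ]
    refine le_ciSup_of_le hbddG ⟨haar J, unitL2_haar J⟩ ?_
    rw [hval]
  · rw [hKz J hJ, Real.sqrt_zero]
    exact le_ciSup_of_le hbddG ⟨haar ((0:ℤ),(0:ℤ)), unitL2_haar _⟩ (Real.sqrt_nonneg _)

end RandomParaproducts
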